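/- Let $n$ be an even positive integer and let $F$ be the finite field of order $2^{2n}$. Then the set $G \cup \{0\}$, where $G = \{x \in F : x^{2^n+1} = 1\}$, contains no four pairwise distinct elements summing to zero, and has cardinality $2^n + 2$. -/

import Mathlib

theorem stmt6 (n : ℕ) (hn : 0 < n) (hne : Even n) (F : Type*) [Field F] [Fintype F]
    (hF : Fintype.card F = 2 ^ (2 * n)) :
    (¬ ∃ a b c d : F,
      a ∈ insert (0 : F) {x : F | x ^ (2 ^ n + 1) = 1} ∧
      b ∈ insert (0 : F) {x : F | x ^ (2 ^ n + 1) = 1} ∧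
      c ∈ insert (0 : F) {x : F | x ^ (2 ^ n + 1) = 1} ∧
      d ∈ insert (0 : F) {x : F | x ^ (2 ^ n + 1) = 1} ∧
      a ≠ b ∧ a ≠ c ∧ a ≠ d ∧ b ≠ c ∧ b ≠ d ∧ c ≠ d ∧ a + b + c + d = 0) ∧
    (insert (0 : F) {x : F | x ^ (2 ^ n + 1) = 1}).ncard = 2 ^ n + 2 := by
  classical
  have hp : Nat.Prime (ringChar F) := CharP.char_is_prime F _
  have hdvd : ringChar F ∣ 2 ^ (2 * n) := by
    rw [← hF]
    exact ringChar.dvd (FiniteField.cast_card_eq_zero F)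
  have hchar2 : ringChar F = 2 :=
    (Nat.prime_dvd_prime_iff_eq hp Nat.prime_two).mp (hp.dvd_of_dvd_pow hdvd)
  haveI hC : CharP F 2 := hchar2 ▸ ringChar.charP F
  haveI : Fact (Nat.Prime 2) := ⟨Nat.prime_two⟩
  have h2 : (2 : F) = 0 := by exact_mod_cast CharP.cast_eq_zero F 2
  have hfrob : ∀ x y : F, (x + y) ^ 2 ^ n = x ^ 2 ^ n + y ^ 2 ^ n := fun x y =>
    add_pow_char_pow x y 2 n
  have hG : ∀ x : F, x ^ (2 ^ n + 1) = 1 → x ≠ 0 ∧ x ^ 2 ^ n = x⁻¹ := by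
    intro x hx
    have hx0 : x ≠ 0 := by
      rintro rfl
      rw [zero_pow (by positivity)] at hx
      exact zero_ne_one hx
    refine ⟨hx0, eq_inv_of_mul_eq_one_left ?_⟩
    rw [← pow_succ]
    exact hx
  have h3 : ¬ (3 ∣ 2 ^ n + 1) := by
    obtain ⟨k, hk⟩ := hne
    subst hk
    have h1 : 2 ^ (k + k) % 3 = 1 := by
      rw [pow_add, ← mul_pow]
      norm_num [Nat.pow_mod]
    omega
  have keyA : ∀ a b c : F, a ^ (2 ^ n + 1) = 1 → b ^ (2 ^ n + 1) = 1 →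
      c ^ (2 ^ n + 1) = 1 → a ≠ b → a + b + c = 0 → False := by
    intro a b c ha hb hc hab hsum
    obtain ⟨ha0, haq⟩ := hG a ha
    obtain ⟨hb0, hbq⟩ := hG b hb
    have hcab : c = a + b := by linear_combination hsum - (a + b) * h2
    rw [hcab, pow_succ, hfrob, haq, hbq] at hc
    have htt : a ^ 2 + a * b + b ^ 2 = 0 := by
      field_simp at hc
      linear_combination hc
    have h3eq : a ^ 3 = b ^ 3 := by linear_combination (a - b) * htt
    have ht1 : a / b ≠ 1 := fun h => hab ((div_eq_one_iff_eq hb0).mp h)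
    have ht3 : (a / b) ^ 3 = 1 := by rw [div_pow, h3eq, div_self (pow_ne_zero _ hb0)]
    have htq : (a / b) ^ (2 ^ n + 1) = 1 := by rw [div_pow, ha, hb, div_one]
    have hgcd : Nat.gcd 3 (2 ^ n + 1) = 1 :=
      (Nat.Prime.coprime_iff_not_dvd Nat.prime_three).mpr h3
    have := pow_gcd_eq_one.mpr ⟨ht3, htq⟩
    rw [hgcd, pow_one] at this
    exact ht1 this
  have keyB : ∀ a b c d : F, a ^ (2 ^ n + 1) = 1 → b ^ (2 ^ n + 1) = 1 →
      c ^ (2 ^ n + 1) = 1 → d ^ (2 ^ n + 1) = 1 →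
      a ≠ b → a ≠ c → b ≠ c → a + b + c + d = 0 → False := by
    intro a b c d ha hb hc hd hab hac hbc hsum
    obtain ⟨ha0, haq⟩ := hG a ha
    obtain ⟨hb0, hbq⟩ := hG b hb
    obtain ⟨hc0, hcq⟩ := hG c hc
    obtain ⟨hd0, hdq⟩ := hG d hd
    have hinv : a⁻¹ + b⁻¹ + c⁻¹ + d⁻¹ = 0 := by
      have h := congrArg (· ^ 2 ^ n) hsum
      simp only [hfrob, haq, hbq, hcq, hdq, zero_pow (by positivity : 2 ^ n ≠ 0)] at h
      exact h
    have hd' : d = a + b + c := by linear_combination hsum - (a + b + c) * h2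
    have habc : a + b + c ≠ 0 := hd' ▸ hd0
    rw [hd'] at hinv
    have hprod : (a + b) * (a + c) * (b + c) = 0 := by
      field_simp at hinv
      linear_combination hinv - a*b*c*h2
    rcases mul_eq_zero.mp hprod with h | h
    · rcases mul_eq_zero.mp h with h | h
      · exact hab (by linear_combination h - b * h2)
      · exact hac (by linear_combination h - c * h2)
    · exact hbc (by linear_combination h - c * h2)
  constructor
  · rintro ⟨a, b, c, d, ha, hb, hc, hd, hab, hac, had, hbc, hbd, hcd, hsum⟩
    simp only [Set.mem_insert_iff, Set.mem_setOf_eq] at ha hb hc hd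
    rcases ha with rfl | ha <;> rcases hb with rfl | hb <;> rcases hc with rfl | hc <;>
        rcases hd with rfl | hd <;>
      first
        | exact hab rfl
        | exact hac rfl
        | exact had rfl
        | exact hbc rfl
        | exact hbd rfl
        | exact hcd rfl
        | exact keyA b c d hb hc hd hbc (by linear_combination hsum)
        | exact keyA a c d ha hc hd hac (by linear_combination hsum)
        | exact keyA a b d ha hb hd hab (by linear_combination hsum)
        | exact keyA a b c ha hb hc hab (by linear_combination hsum)
        | exact keyB a b c d ha hb hc hd hab hac hbc hsum
  · have hcu : Fintype.card Fˣ = 2 ^ (2 * n) - 1 := by rw [Fintype.card_units, hF]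
    have h4 : 4 ≤ 2 ^ (2 * n) := by
      calc (4 : ℕ) = 2 ^ 2 := by norm_num
      _ ≤ 2 ^ (2 * n) := Nat.pow_le_pow_right (by norm_num) (by omega)
    have hqN : (2 ^ n + 1) ∣ 2 ^ (2 * n) - 1 := by
      have h1 : 1 ≤ 2 ^ n := Nat.one_le_two_pow
      obtain ⟨m, hm⟩ : ∃ m, 2 ^ n = m + 1 := ⟨2 ^ n - 1, by omega⟩
      refine ⟨2 ^ n - 1, ?_⟩
      have h2n : 2 ^ (2 * n) = 2 ^ n * 2 ^ n := by rw [two_mul, pow_add]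
      rw [h2n, hm, Nat.add_sub_cancel]
      have e1 : (m + 1) * (m + 1) = m * m + 2 * m + 1 := by ring
      have e2 : (m + 1 + 1) * m = m * m + 2 * m := by ring
      omega
    obtain ⟨g, hg⟩ := IsCyclic.exists_ofOrder_eq_natCard (α := Fˣ)
    rw [Nat.card_eq_fintype_card, hcu] at hg
    set N := 2 ^ (2 * n) - 1 with hN
    have hN0 : 0 < N := by omega
    set ζ : Fˣ := g ^ (N / (2 ^ n + 1)) with hζ
    have hord : orderOf ζ = 2 ^ n + 1 := by
      rw [hζ, orderOf_pow, hg]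
      have hm : (N / (2 ^ n + 1)) ∣ N := Nat.div_dvd_of_dvd hqN
      rw [Nat.gcd_eq_right hm, Nat.div_div_self hqN (by omega)]
    have hprim : IsPrimitiveRoot ((ζ : F)) (2 ^ n + 1) := by
      rw [IsPrimitiveRoot.coe_units_iff]
      exact hord ▸ IsPrimitiveRoot.orderOf ζ
    have hset : {x : F | x ^ (2 ^ n + 1) = 1} = ↑(Polynomial.nthRootsFinset (2 ^ n + 1) (1 : F)) := by
      ext x
      simp [Polynomial.mem_nthRootsFinset (by positivity : 0 < 2 ^ n + 1) (1 : F)]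
    rw [hset, Set.ncard_insert_of_notMem, Set.ncard_coe_finset,
      hprim.card_nthRootsFinset]
    simp [Polynomial.mem_nthRootsFinset (by positivity : 0 < 2 ^ n + 1) (1 : F),
      zero_pow (by positivity : 2 ^ n + 1 ≠ 0)]
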